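/- Assume μ(τ) ≠ 0 and that there are constants C₀ > 0 and δ₁ > 0 with μ(‖τ_N/N − μ(τ)‖ ≥ ‖μ(τ)‖/2) ≤ C₀ N^{−δ₁} for all N ≥ 1. Let A₁, A₂ : X → ℝ and B₁, B₂ : Y → ℝ be bounded measurable functions such that for some constants C_f, δ₂, C_G, δ₃ > 0: |μ(A₁ · (A₂ ∘ f^N)) − μ(A₁)μ(A₂)| ≤ C_f N^{−δ₂} for all N ≥ 1, and |ν(B₁ · (B₂ ∘ G_t)) − ν(B₁)ν(B₂)| ≤ C_G ‖t‖^{−δ₃} for all t ∈ ℝ^d, t ≠ 0. Then, with Φ_i(x, y) = A_i(x)B_i(y), there exists C' such that |∫ Φ₁ · (Φ₂ ∘ F^N) dζ − (∫ Φ₁ dζ)(∫ Φ₂ dζ)| ≤ C' N^{−min(δ₁, δ₂, δ₃)} for all N ≥ 1. -/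

import Mathlib

open MeasureTheory Filter Topology

/-- Birkhoff sums `τ_N(x) = ∑_{n<N} τ(f^n x)` of an `ℝ^d`-valued observable. -/
noncomputable def birkhoff {X : Type*} {d : ℕ} (f : X → X)
    (τ : X → EuclideanSpace ℝ (Fin d)) (N : ℕ) (x : X) : EuclideanSpace ℝ (Fin d) :=
  ∑ n ∈ Finset.range N, τ (f^[n] x)

/-- The generalized `T,T⁻¹` (skew product) map `F(x,y) = (f x, G_{τ(x)} y)`. -/
def skew {X Y : Type*} {d : ℕ} (f : X → X) (G : EuclideanSpace ℝ (Fin d) → Y → Y)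
    (τ : X → EuclideanSpace ℝ (Fin d)) : X × Y → X × Y :=
  fun q => (f q.1, G (τ q.1) q.2)

private lemma abs_mul_le' {x y a b : ℝ} (hx : |x| ≤ a) (hy : |y| ≤ b) : |x * y| ≤ a * b := by
  rw [abs_mul]; exact mul_le_mul hx hy (abs_nonneg _) ((abs_nonneg x).trans hx)

private lemma integrable_of_bdd {α : Type*} [MeasurableSpace α] {μ : Measure α}
    [IsFiniteMeasure μ] {g : α → ℝ} (hg : Measurable g) (C : ℝ) (h : ∀ x, |g x| ≤ C) :
    Integrable g μ :=
  (integrable_const C).mono' hg.aestronglyMeasurable (ae_of_all _ fun x => by simpa using h x)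

private lemma skew_iter {X Y : Type*} {d : ℕ} (f : X → X)
    (G : EuclideanSpace ℝ (Fin d) → Y → Y) (τ : X → EuclideanSpace ℝ (Fin d))
    (hG0 : G 0 = id) (hGadd : ∀ t s, G (t + s) = G t ∘ G s) :
    ∀ (N : ℕ) (q : X × Y),
      (skew f G τ)^[N] q = (f^[N] q.1, G (birkhoff f τ N q.1) q.2) := by
  intro N
  induction N with
  | zero => intro q; simp [birkhoff, hG0]
  | succ n ih =>
    intro q
    rw [Function.iterate_succ_apply', ih, Function.iterate_succ_apply']
    show (f (f^[n] q.1), G (τ (f^[n] q.1)) (G (birkhoff f τ n q.1) q.2)) = _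
    have : birkhoff f τ (n+1) q.1 = τ (f^[n] q.1) + birkhoff f τ n q.1 := by
      simp [birkhoff, Finset.sum_range_succ, add_comm]
    rw [this, hGadd]
    rfl

set_option maxHeartbeats 1000000 in
/-- Theorem 4.1(b) of the paper (with explicit rates): nonzero drift, polynomial large
deviations with rate `N^{-δ₁}`, `f` polynomially mixing with rate `N^{-δ₂}` and `G`
polynomially mixing with rate `‖t‖^{-δ₃}` imply that the skew product `F` is polynomially
mixing with rate `N^{-min(δ₁,δ₂,δ₃)}` for product observables. -/
theorem stmt_2
    {X Y : Type*} [MeasurableSpace X] [MeasurableSpace Y]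
    (μ : Measure X) (ν : Measure Y)
    [IsProbabilityMeasure μ] [IsProbabilityMeasure ν]
    {d : ℕ}
    (f : X → X) (hf : MeasurePreserving f μ μ)
    (G : EuclideanSpace ℝ (Fin d) → Y → Y)
    (hGmeas : Measurable fun q : EuclideanSpace ℝ (Fin d) × Y => G q.1 q.2)
    (hG0 : G 0 = id)
    (hGadd : ∀ t s, G (t + s) = G t ∘ G s)
    (hGpres : ∀ t, MeasurePreserving (G t) ν ν)
    (τ : X → EuclideanSpace ℝ (Fin d)) (hτmeas : Measurable τ)
    (hτbdd : ∃ M, ∀ x, ‖τ x‖ ≤ M)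
    (hdrift : (∫ x, τ x ∂μ) ≠ 0)
    (C₀ δ₁ : ℝ) (hC₀ : 0 < C₀) (hδ₁ : 0 < δ₁)
    -- polynomial large deviation bounds for τ at scale ‖μ(τ)‖/2
    (hLD : ∀ N : ℕ, 1 ≤ N →
      (μ {x | ‖∫ x, τ x ∂μ‖ / 2 ≤ ‖(N : ℝ)⁻¹ • birkhoff f τ N x - ∫ x, τ x ∂μ‖}).toReal
        ≤ C₀ * (N : ℝ) ^ (-δ₁))
    (A₁ A₂ : X → ℝ) (B₁ B₂ : Y → ℝ)
    (hA₁ : Measurable A₁) (hA₂ : Measurable A₂)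
    (hB₁ : Measurable B₁) (hB₂ : Measurable B₂)
    (hA₁b : ∃ M, ∀ x, |A₁ x| ≤ M) (hA₂b : ∃ M, ∀ x, |A₂ x| ≤ M)
    (hB₁b : ∃ M, ∀ y, |B₁ y| ≤ M) (hB₂b : ∃ M, ∀ y, |B₂ y| ≤ M)
    (Cf δ₂ CG δ₃ : ℝ) (hCf : 0 < Cf) (hδ₂ : 0 < δ₂) (hCG : 0 < CG) (hδ₃ : 0 < δ₃)
    -- polynomial mixing of f for A₁, A₂
    (hfmix : ∀ N : ℕ, 1 ≤ N →
      |(∫ x, A₁ x * A₂ (f^[N] x) ∂μ) - (∫ x, A₁ x ∂μ) * ∫ x, A₂ x ∂μ|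
        ≤ Cf * (N : ℝ) ^ (-δ₂))
    -- polynomial mixing of G for B₁, B₂
    (hGmix : ∀ t : EuclideanSpace ℝ (Fin d), t ≠ 0 →
      |(∫ y, B₁ y * B₂ (G t y) ∂ν) - (∫ y, B₁ y ∂ν) * ∫ y, B₂ y ∂ν|
        ≤ CG * ‖t‖ ^ (-δ₃)) :
    ∃ C' : ℝ, ∀ N : ℕ, 1 ≤ N →
      |(∫ q, (A₁ q.1 * B₁ q.2) * (A₂ ((skew f G τ)^[N] q).1 * B₂ ((skew f G τ)^[N] q).2)
          ∂(μ.prod ν))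
        - (∫ q, A₁ q.1 * B₁ q.2 ∂(μ.prod ν)) * ∫ q, A₂ q.1 * B₂ q.2 ∂(μ.prod ν)|
        ≤ C' * (N : ℝ) ^ (-(min δ₁ (min δ₂ δ₃))) := by
  classical
  obtain ⟨Ma₁, hMa₁⟩ := hA₁b
  obtain ⟨Ma₂, hMa₂⟩ := hA₂b
  obtain ⟨Mb₁, hMb₁⟩ := hB₁b
  obtain ⟨Mb₂, hMb₂⟩ := hB₂b
  set a₁ : ℝ := max Ma₁ 0
  set a₂ : ℝ := max Ma₂ 0
  set b₁ : ℝ := max Mb₁ 0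
  set b₂ : ℝ := max Mb₂ 0
  have ha₁ : ∀ x, |A₁ x| ≤ a₁ := fun x => (hMa₁ x).trans (le_max_left _ _)
  have ha₂ : ∀ x, |A₂ x| ≤ a₂ := fun x => (hMa₂ x).trans (le_max_left _ _)
  have hb₁ : ∀ y, |B₁ y| ≤ b₁ := fun y => (hMb₁ y).trans (le_max_left _ _)
  have hb₂ : ∀ y, |B₂ y| ≤ b₂ := fun y => (hMb₂ y).trans (le_max_left _ _)
  have ha₁0 : (0:ℝ) ≤ a₁ := le_max_right _ _
  have ha₂0 : (0:ℝ) ≤ a₂ := le_max_right _ _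
  have hb₁0 : (0:ℝ) ≤ b₁ := le_max_right _ _
  have hb₂0 : (0:ℝ) ≤ b₂ := le_max_right _ _
  set m : EuclideanSpace ℝ (Fin d) := ∫ x, τ x ∂μ with hm_def
  have hm : 0 < ‖m‖ := norm_pos_iff.mpr hdrift
  have hfm : Measurable f := hf.measurable
  have hTmeas : ∀ N : ℕ, Measurable (birkhoff f τ N) := fun N =>
    Finset.measurable_sum _ fun n _ => hτmeas.comp (hfm.iterate n)
  set c : ℝ := (∫ y, B₁ y ∂ν) * ∫ y, B₂ y ∂ν with hc_def
  set b : EuclideanSpace ℝ (Fin d) → ℝ := fun t => ∫ y, B₁ y * B₂ (G t y) ∂ν with hb_def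
  have hbmeas : Measurable b := by
    have h1 : StronglyMeasurable fun p : EuclideanSpace ℝ (Fin d) × Y =>
        B₁ p.2 * B₂ (G p.1 p.2) :=
      ((hB₁.comp measurable_snd).mul (hB₂.comp hGmeas)).stronglyMeasurable
    exact h1.integral_prod_right'.measurable
  have hbbd : ∀ t, |b t| ≤ b₁ * b₂ := by
    intro t
    have := norm_integral_le_of_norm_le_const (μ := ν)
      (f := fun y => B₁ y * B₂ (G t y)) (C := b₁ * b₂)
      (ae_of_all _ fun y => by
        rw [Real.norm_eq_abs]; exact abs_mul_le' (hb₁ y) (hb₂ (G t y)))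
    simpa [hb_def] using this
  have hcbd : |c| ≤ b₁ * b₂ := by
    have h1 : ‖∫ y, B₁ y ∂ν‖ ≤ b₁ := by
      have := norm_integral_le_of_norm_le_const (μ := ν) (f := B₁) (C := b₁)
        (ae_of_all _ fun y => by simpa using hb₁ y)
      simpa using this
    have h2 : ‖∫ y, B₂ y ∂ν‖ ≤ b₂ := by
      have := norm_integral_le_of_norm_le_const (μ := ν) (f := B₂) (C := b₂)
        (ae_of_all _ fun y => by simpa using hb₂ y)
      simpa using this
    simpa [hc_def] using abs_mul_le' h1 h2
  have hbc : ∀ t, |b t - c| ≤ 2 * (b₁ * b₂) := by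
    intro t
    calc |b t - c| ≤ |b t| + |c| := abs_sub _ _
    _ ≤ b₁ * b₂ + b₁ * b₂ := add_le_add (hbbd t) hcbd
    _ = 2 * (b₁ * b₂) := by ring
  refine ⟨a₁ * a₂ * (2 * (b₁ * b₂)) * C₀ + a₁ * a₂ * (CG * (‖m‖ / 2) ^ (-δ₃))
    + b₁ * b₂ * Cf, ?_⟩
  intro N hN
  have hN1 : (1:ℝ) ≤ (N:ℝ) := by exact_mod_cast hN
  have hNpos : (0:ℝ) < (N:ℝ) := by linarith
  set T := birkhoff f τ N with hT_def
  set S : Set X := {x | ‖m‖ / 2 ≤ ‖(N : ℝ)⁻¹ • T x - m‖} with hS_def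
  have hSmeas : MeasurableSet S := by
    have : Measurable fun x => ‖(N : ℝ)⁻¹ • T x - m‖ :=
      (((hTmeas N).const_smul ((N:ℝ)⁻¹)).sub measurable_const).norm
    exact measurableSet_le measurable_const this
  have hSbound : (μ S).toReal ≤ C₀ * (N : ℝ) ^ (-δ₁) := hLD N hN
  have hiter : ∀ q : X × Y, (skew f G τ)^[N] q = (f^[N] q.1, G (T q.1) q.2) :=
    skew_iter f G τ hG0 hGadd N
  have hΦ₁ : (∫ q, A₁ q.1 * B₁ q.2 ∂(μ.prod ν)) = (∫ x, A₁ x ∂μ) * ∫ y, B₁ y ∂ν :=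
    integral_prod_mul A₁ B₁
  have hΦ₂ : (∫ q, A₂ q.1 * B₂ q.2 ∂(μ.prod ν)) = (∫ x, A₂ x ∂μ) * ∫ y, B₂ y ∂ν :=
    integral_prod_mul A₂ B₂
  -- the product integrand
  set H : X × Y → ℝ :=
    fun q => (A₁ q.1 * B₁ q.2) * (A₂ (f^[N] q.1) * B₂ (G (T q.1) q.2)) with hH_def
  have hHmeas : Measurable H := by
    have hG' : Measurable fun q : X × Y => B₂ (G (T q.1) q.2) :=
      hB₂.comp (hGmeas.comp (((hTmeas N).comp measurable_fst).prodMk measurable_snd))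
    exact ((hA₁.comp measurable_fst).mul (hB₁.comp measurable_snd)).mul
      (((hA₂.comp (hfm.iterate N)).comp measurable_fst).mul hG')
  have hHint : Integrable H (μ.prod ν) :=
    integrable_of_bdd hHmeas ((a₁ * b₁) * (a₂ * b₂)) fun q =>
      abs_mul_le' (abs_mul_le' (ha₁ _) (hb₁ _)) (abs_mul_le' (ha₂ _) (hb₂ _))
  have hfub : (∫ q, H q ∂(μ.prod ν)) = ∫ x, (A₁ x * A₂ (f^[N] x)) * b (T x) ∂μ := by
    rw [integral_prod _ hHint]
    refine integral_congr_ae (ae_of_all _ fun x => ?_)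
    dsimp only
    have : (fun y => H (x, y)) =
        fun y => (A₁ x * A₂ (f^[N] x)) * (B₁ y * B₂ (G (T x) y)) :=
      funext fun y => by simp only [hH_def]; ring
    rw [this, integral_const_mul]
  -- integrals over X
  set g₁ : X → ℝ := fun x => A₁ x * A₂ (f^[N] x) with hg₁_def
  have hg₁meas : Measurable g₁ := hA₁.mul (hA₂.comp (hfm.iterate N))
  have hg₁bd : ∀ x, |g₁ x| ≤ a₁ * a₂ := fun x => abs_mul_le' (ha₁ x) (ha₂ _)
  have hg₂meas : Measurable fun x => g₁ x * b (T x) :=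
    hg₁meas.mul (hbmeas.comp (hTmeas N))
  have hg₂int : Integrable (fun x => g₁ x * b (T x)) μ :=
    integrable_of_bdd hg₂meas (a₁ * a₂ * (b₁ * b₂)) fun x =>
      abs_mul_le' (hg₁bd x) (hbbd _)
  have hg₃int : Integrable (fun x => g₁ x * c) μ :=
    integrable_of_bdd (hg₁meas.mul_const c) (a₁ * a₂ * (b₁ * b₂)) fun x =>
      abs_mul_le' (hg₁bd x) hcbd
  have hsplit : (∫ x, g₁ x * b (T x) ∂μ) - (∫ x, g₁ x ∂μ) * c
      = ∫ x, g₁ x * (b (T x) - c) ∂μ := by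
    rw [show (fun x => g₁ x * (b (T x) - c)) = fun x => g₁ x * b (T x) - g₁ x * c from
      funext fun x => by ring, integral_sub hg₂int hg₃int, integral_mul_const]
  -- the error term bound
  set K : ℝ := CG * (‖m‖ / 2) ^ (-δ₃) * (N : ℝ) ^ (-δ₃) with hK_def
  have hK0 : 0 ≤ K := by
    have := Real.rpow_nonneg (by positivity : (0:ℝ) ≤ ‖m‖ / 2) (-δ₃)
    have := Real.rpow_nonneg hNpos.le (-δ₃)
    positivity
  set φ : X → ℝ :=
    fun x => S.indicator (fun _ => a₁ * a₂ * (2 * (b₁ * b₂))) x + a₁ * a₂ * K with hφ_def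
  have hpt : ∀ x, |g₁ x * (b (T x) - c)| ≤ φ x := by
    intro x
    by_cases hx : x ∈ S
    · have h1 : |g₁ x * (b (T x) - c)| ≤ a₁ * a₂ * (2 * (b₁ * b₂)) :=
        abs_mul_le' (hg₁bd x) (hbc _)
      have : φ x = a₁ * a₂ * (2 * (b₁ * b₂)) + a₁ * a₂ * K := by
        simp [hφ_def, Set.indicator_of_mem hx]
      rw [this]
      nlinarith [mul_nonneg (mul_nonneg ha₁0 ha₂0) hK0]
    · have hxlt : ‖(N : ℝ)⁻¹ • T x - m‖ < ‖m‖ / 2 := by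
        simpa [hS_def] using hx
      have hnorm : ‖(N : ℝ)⁻¹ • T x‖ = (N:ℝ)⁻¹ * ‖T x‖ := by
        rw [norm_smul]
        simp [abs_of_pos (inv_pos.mpr hNpos)]
      have htri : ‖m‖ - ‖(N : ℝ)⁻¹ • T x‖ ≤ ‖(N : ℝ)⁻¹ • T x - m‖ := by
        have := norm_sub_norm_le m ((N : ℝ)⁻¹ • T x)
        rwa [norm_sub_rev] at this
      have hTlb : (N:ℝ) * (‖m‖ / 2) ≤ ‖T x‖ := by
        have h1 : ‖m‖ / 2 ≤ (N:ℝ)⁻¹ * ‖T x‖ := by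
          rw [← hnorm]; linarith
        calc (N:ℝ) * (‖m‖ / 2) ≤ (N:ℝ) * ((N:ℝ)⁻¹ * ‖T x‖) :=
              mul_le_mul_of_nonneg_left h1 hNpos.le
        _ = ‖T x‖ := by field_simp
      have hTpos : 0 < ‖T x‖ := lt_of_lt_of_le (by positivity) hTlb
      have hTne : T x ≠ 0 := norm_pos_iff.mp hTpos
      have hmix := hGmix (T x) hTne
      have hbound : |b (T x) - c| ≤ K := by
        have h2 : ‖T x‖ ^ (-δ₃) ≤ ((N:ℝ) * (‖m‖ / 2)) ^ (-δ₃) :=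
          Real.rpow_le_rpow_of_nonpos (by positivity) hTlb (by linarith)
        have h3 : ((N:ℝ) * (‖m‖ / 2)) ^ (-δ₃) = (N:ℝ) ^ (-δ₃) * (‖m‖ / 2) ^ (-δ₃) :=
          Real.mul_rpow hNpos.le (by positivity)
        calc |b (T x) - c| ≤ CG * ‖T x‖ ^ (-δ₃) := hmix
        _ ≤ CG * ((N:ℝ) * (‖m‖ / 2)) ^ (-δ₃) := by
              exact mul_le_mul_of_nonneg_left h2 hCG.le
        _ = K := by rw [h3, hK_def]; ring
      have : φ x = a₁ * a₂ * K := by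
        simp [hφ_def, Set.indicator_of_notMem hx]
      rw [this]
      exact abs_mul_le' (hg₁bd x) hbound
  have hφint : Integrable φ μ :=
    ((integrable_const _).indicator hSmeas).add (integrable_const _)
  have hφval : (∫ x, φ x ∂μ)
      = a₁ * a₂ * (2 * (b₁ * b₂)) * (μ S).toReal + a₁ * a₂ * K := by
    rw [hφ_def, integral_add ((integrable_const _).indicator hSmeas) (integrable_const _),
      integral_indicator_const _ hSmeas, integral_const]
    simp [mul_comm, Measure.real]
  have herr : |∫ x, g₁ x * (b (T x) - c) ∂μ|
      ≤ a₁ * a₂ * (2 * (b₁ * b₂)) * (μ S).toReal + a₁ * a₂ * K := by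
    have habs : |∫ x, g₁ x * (b (T x) - c) ∂μ| ≤ ∫ x, |g₁ x * (b (T x) - c)| ∂μ := by
      simpa only [Real.norm_eq_abs] using
        norm_integral_le_integral_norm (μ := μ) (f := fun x => g₁ x * (b (T x) - c))
    have hgint : Integrable (fun x => g₁ x * (b (T x) - c)) μ :=
      integrable_of_bdd (hg₁meas.mul ((hbmeas.comp (hTmeas N)).sub measurable_const))
        (a₁ * a₂ * (2 * (b₁ * b₂))) fun x => abs_mul_le' (hg₁bd x) (hbc _)
    calc |∫ x, g₁ x * (b (T x) - c) ∂μ| ≤ ∫ x, |g₁ x * (b (T x) - c)| ∂μ := habs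
    _ ≤ ∫ x, φ x ∂μ := integral_mono hgint.abs hφint hpt
    _ = _ := hφval
  -- assemble
  have hmain : |(∫ q, H q ∂(μ.prod ν))
      - (∫ q, A₁ q.1 * B₁ q.2 ∂(μ.prod ν)) * ∫ q, A₂ q.1 * B₂ q.2 ∂(μ.prod ν)|
      ≤ a₁ * a₂ * (2 * (b₁ * b₂)) * (C₀ * (N:ℝ) ^ (-δ₁)) + a₁ * a₂ * K
        + b₁ * b₂ * (Cf * (N:ℝ) ^ (-δ₂)) := by
    rw [hfub, hΦ₁, hΦ₂]
    have hre : (∫ x, A₁ x ∂μ) * (∫ y, B₁ y ∂ν) * ((∫ x, A₂ x ∂μ) * ∫ y, B₂ y ∂ν)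
        = ((∫ x, A₁ x ∂μ) * ∫ x, A₂ x ∂μ) * c := by rw [hc_def]; ring
    rw [hre]
    have hdec : (∫ x, g₁ x * b (T x) ∂μ) - ((∫ x, A₁ x ∂μ) * ∫ x, A₂ x ∂μ) * c
        = (∫ x, g₁ x * (b (T x) - c) ∂μ)
          + ((∫ x, g₁ x ∂μ) - (∫ x, A₁ x ∂μ) * ∫ x, A₂ x ∂μ) * c := by
      rw [← hsplit]; ring
    calc |(∫ x, g₁ x * b (T x) ∂μ) - ((∫ x, A₁ x ∂μ) * ∫ x, A₂ x ∂μ) * c|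
        ≤ |∫ x, g₁ x * (b (T x) - c) ∂μ|
          + |(∫ x, g₁ x ∂μ) - (∫ x, A₁ x ∂μ) * ∫ x, A₂ x ∂μ| * |c| := by
          rw [hdec]
          exact (abs_add_le _ _).trans (by rw [abs_mul])
    _ ≤ (a₁ * a₂ * (2 * (b₁ * b₂)) * (μ S).toReal + a₁ * a₂ * K)
          + (Cf * (N:ℝ) ^ (-δ₂)) * (b₁ * b₂) := by
          refine add_le_add herr (mul_le_mul (hfmix N hN) hcbd (abs_nonneg _) ?_)
          positivity
    _ ≤ _ := by
          have h1 : a₁ * a₂ * (2 * (b₁ * b₂)) * (μ S).toReal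
              ≤ a₁ * a₂ * (2 * (b₁ * b₂)) * (C₀ * (N:ℝ) ^ (-δ₁)) :=
            mul_le_mul_of_nonneg_left hSbound (by positivity)
          linarith
  -- compare exponents
  have hrate : ∀ δ : ℝ, min δ₁ (min δ₂ δ₃) ≤ δ →
      (N:ℝ) ^ (-δ) ≤ (N:ℝ) ^ (-(min δ₁ (min δ₂ δ₃))) := fun δ hδ =>
    Real.rpow_le_rpow_of_exponent_le hN1 (by linarith)
  have hr₁ := hrate δ₁ (min_le_left _ _)
  have hr₂ := hrate δ₂ ((min_le_right _ _).trans (min_le_left _ _))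
  have hr₃ := hrate δ₃ ((min_le_right _ _).trans (min_le_right _ _))
  have hrw : (∫ q, (A₁ q.1 * B₁ q.2) * (A₂ ((skew f G τ)^[N] q).1
        * B₂ ((skew f G τ)^[N] q).2) ∂(μ.prod ν)) = ∫ q, H q ∂(μ.prod ν) := by
    refine integral_congr_ae (ae_of_all _ fun q => ?_)
    simp only [hH_def, hiter q]
  rw [hrw]
  refine hmain.trans ?_
  have e₁ : a₁ * a₂ * (2 * (b₁ * b₂)) * (C₀ * (N:ℝ) ^ (-δ₁))
      ≤ a₁ * a₂ * (2 * (b₁ * b₂)) * C₀ * (N:ℝ) ^ (-(min δ₁ (min δ₂ δ₃))) := by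
    have := mul_le_mul_of_nonneg_left hr₁
      (by positivity : (0:ℝ) ≤ a₁ * a₂ * (2 * (b₁ * b₂)) * C₀)
    linarith [this]
  have e₂ : a₁ * a₂ * K
      ≤ a₁ * a₂ * (CG * (‖m‖ / 2) ^ (-δ₃)) * (N:ℝ) ^ (-(min δ₁ (min δ₂ δ₃))) := by
    have h0 : (0:ℝ) ≤ a₁ * a₂ * (CG * (‖m‖ / 2) ^ (-δ₃)) := by
      have := Real.rpow_nonneg (by positivity : (0:ℝ) ≤ ‖m‖ / 2) (-δ₃)
      positivity
    have := mul_le_mul_of_nonneg_left hr₃ h0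
    calc a₁ * a₂ * K = a₁ * a₂ * (CG * (‖m‖ / 2) ^ (-δ₃)) * (N:ℝ) ^ (-δ₃) := by
          rw [hK_def]; ring
    _ ≤ _ := this
  have e₃ : b₁ * b₂ * (Cf * (N:ℝ) ^ (-δ₂))
      ≤ b₁ * b₂ * Cf * (N:ℝ) ^ (-(min δ₁ (min δ₂ δ₃))) := by
    have := mul_le_mul_of_nonneg_left hr₂
      (by positivity : (0:ℝ) ≤ b₁ * b₂ * Cf)
    linarith [this]
  calc _ ≤ a₁ * a₂ * (2 * (b₁ * b₂)) * C₀ * (N:ℝ) ^ (-(min δ₁ (min δ₂ δ₃)))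
        + a₁ * a₂ * (CG * (‖m‖ / 2) ^ (-δ₃)) * (N:ℝ) ^ (-(min δ₁ (min δ₂ δ₃)))
        + b₁ * b₂ * Cf * (N:ℝ) ^ (-(min δ₁ (min δ₂ δ₃))) := by
        linarith [e₁, e₂, e₃]
  _ = _ := by ring
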